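/- (Controller certificate for the Moore–Greitzer jet engine model.) Let A(x) = [[-3φ - (3/2)φ², -1], [1, 0]] for x = (φ, ψ) ∈ ℝ² and B = (0, 1)ᵀ. There exist a symmetric positive definite 2×2 real matrix W with 0.1·I ⪯ W ⪯ 1.3·I and a polynomial function ρ : ℝ² → ℝ with ρ(x) ≥ 0 for all x, such that for all x ∈ ℝ²: W·A(x)ᵀ + A(x)·W - ρ(x)·B·Bᵀ ⪯ -0.2·W. (This is the pointwise controller LMI with contraction rate λ = 0.1 for the Moore–Greitzer surge dynamics φ̇ = -ψ - (3/2)φ² - (1/2)φ³, ψ̇ = φ + u, whose Jacobian is A(x).) -/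

import Mathlib

open Matrix

/-- The Jacobian of the Moore–Greitzer surge dynamics. -/
noncomputable def mooreGreitzerA (x : Fin 2 → ℝ) : Matrix (Fin 2) (Fin 2) ℝ :=
  !![-3 * x 0 - (3 / 2) * (x 0) ^ 2, -1; 1, 0]

/-- The input matrix of the Moore–Greitzer surge dynamics. -/
noncomputable def mooreGreitzerB : Matrix (Fin 2) (Fin 1) ℝ := !![0; 1]

lemma herm2 (a b c : ℝ) : (!![a, b; b, c]).IsHermitian := by
  ext i j
  fin_cases i <;> fin_cases j <;> simp [Matrix.conjTranspose_apply]

lemma quad2 (a b c : ℝ) (M : Matrix (Fin 2) (Fin 2) ℝ) (hM : M = !![a, b; b, c])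
    (v : Fin 2 → ℝ) :
    dotProduct (star v) (M *ᵥ v) = a * v 0 ^ 2 + 2 * b * (v 0 * v 1) + c * v 1 ^ 2 := by
  subst hM
  simp [dotProduct, Matrix.mulVec, Fin.sum_univ_two, Matrix.vecHead, Matrix.vecTail]
  ring

lemma psd2 (a b c : ℝ) (M : Matrix (Fin 2) (Fin 2) ℝ) (hM : M = !![a, b; b, c])
    (h : ∀ v0 v1 : ℝ, 0 ≤ a * v0 ^ 2 + 2 * b * (v0 * v1) + c * v1 ^ 2) :
    M.PosSemidef := by
  refine Matrix.posSemidef_iff_dotProduct_mulVec.mpr ⟨hM ▸ herm2 a b c, fun v => ?_⟩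
  rw [quad2 a b c M hM v]
  exact h (v 0) (v 1)

theorem mooreGreitzer_controller_certificate :
    ∃ (W : Matrix (Fin 2) (Fin 2) ℝ) (ρ : MvPolynomial (Fin 2) ℝ),
      W.PosDef ∧
      (W - (0.1 : ℝ) • (1 : Matrix (Fin 2) (Fin 2) ℝ)).PosSemidef ∧
      ((1.3 : ℝ) • (1 : Matrix (Fin 2) (Fin 2) ℝ) - W).PosSemidef ∧
      (∀ x : Fin 2 → ℝ, 0 ≤ MvPolynomial.eval x ρ) ∧
      (∀ x : Fin 2 → ℝ,
        ((-(0.2 : ℝ)) • W -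
          (W * (mooreGreitzerA x)ᵀ + mooreGreitzerA x * W -
            MvPolynomial.eval x ρ • (mooreGreitzerB * mooreGreitzerBᵀ))).PosSemidef) := by
  refine ⟨!![0.2, 0.33; 0.33, 1.2],
    MvPolynomial.C 0.9 + MvPolynomial.C 50 *
      (MvPolynomial.C 0.934 + MvPolynomial.C 0.99 * MvPolynomial.X 0 +
        MvPolynomial.C 0.495 * (MvPolynomial.X 0) ^ 2) ^ 2, ?_, ?_, ?_, ?_, ?_⟩
  · -- PosDef
    refine Matrix.posDef_iff_dotProduct_mulVec.mpr ⟨herm2 _ _ _, fun v hv => ?_⟩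
    rw [quad2 0.2 0.33 1.2 _ rfl v]
    have h01 : v 0 ≠ 0 ∨ v 1 ≠ 0 := by
      by_contra h
      push_neg at h
      exact hv (funext fun i => by fin_cases i <;> simp [h.1, h.2])
    rcases h01 with h | h
    · nlinarith [sq_pos_of_ne_zero h, sq_nonneg (0.33 * v 0 + 1.2 * v 1)]
    · nlinarith [sq_pos_of_ne_zero h, sq_nonneg (0.2 * v 0 + 0.33 * v 1)]
  · exact psd2 0.1 0.33 1.1 _ (by ext i j; fin_cases i <;> fin_cases j <;>
      norm_num [Matrix.sub_apply, Matrix.smul_apply, Matrix.one_apply])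
      (fun v0 v1 => by nlinarith [sq_nonneg (10 * v0 + 33 * v1), sq_nonneg v1])
  · exact psd2 1.1 (-0.33) 0.1 _ (by ext i j; fin_cases i <;> fin_cases j <;>
      norm_num [Matrix.sub_apply, Matrix.smul_apply, Matrix.one_apply])
      (fun v0 v1 => by nlinarith [sq_nonneg (33 * v0 - 10 * v1), sq_nonneg v0])
  · intro x
    simp only [map_add, _root_.map_mul, map_pow, MvPolynomial.eval_C, MvPolynomial.eval_X]
    positivity
  · intro x
    set φ := x 0 with hφ
    refine psd2 (0.62 + 1.2 * φ + 0.6 * φ ^ 2)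
      (0.934 + 0.99 * φ + 0.495 * φ ^ 2)
      (50 * (0.934 + 0.99 * φ + 0.495 * φ ^ 2) ^ 2) _ ?_ ?_
    · ext i j
      fin_cases i <;> fin_cases j <;>
        simp [mooreGreitzerA, mooreGreitzerB, Matrix.mul_apply, Fin.sum_univ_two,
          Fin.sum_univ_one, Matrix.transpose_apply, Matrix.vecHead, Matrix.vecTail, Matrix.vecMul, dotProduct, Matrix.smul_apply, map_add, _root_.map_mul, map_pow,
          MvPolynomial.eval_C, MvPolynomial.eval_X, ← hφ] <;> ring
    · intro v0 v1
      nlinarith [sq_nonneg ((φ + 1) * v0),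
        sq_nonneg (0.02 * v0 + (0.934 + 0.99 * φ + 0.495 * φ ^ 2) * v1)]
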